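/- arXiv:2311.01281 — 2 statements merged into one kernel-verified Lean document; each statement's English description precedes it below -/
import Mathlib

section
/- If two measurable functions f₁, f₂ : [0,1]² → ℝ are isomorphic, i.e., there exist measure-preserving invertible maps T, S of [0,1] (with Lebesgue measure) such that f₂(T x, S y) = f₁(x, y) for almost every (x, y), then the pushforward of the product Bernoulli measure (μ^∞ × μ^∞ on ([0,1]^ℕ)²) under the map (x, y) ↦ (f₁(xₙ, yₘ))ₙ,ₘ equals the pushforward under (x, y) ↦ (f₂(xₙ, yₘ))ₙ,ₘ; that is, isomorphic functions have equal matrix distributions. -/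
open MeasureTheory unitInterval
open scoped unitInterval

/-- `ν` is the infinite product of copies of `μ` on the sequence space. -/
def IsProductMeasure {α : Type*} [MeasurableSpace α] (μ : Measure α) (ν : Measure (ℕ → α)) : Prop :=
  ∀ (s : Finset ℕ) (A : ℕ → Set α), (∀ n, MeasurableSet (A n)) →
    ν {x | ∀ n ∈ s, x n ∈ A n} = ∏ n ∈ s, μ (A n)

lemma prodMeasure_univ {α : Type*} [MeasurableSpace α] {μ : Measure α} {ν : Measure (ℕ → α)}
    (hν : IsProductMeasure μ ν) : ν Set.univ = 1 := by
  have := hν ∅ (fun _ => Set.univ) (fun _ => MeasurableSet.univ)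
  simpa using this

lemma cylinder_eq (s : Finset ℕ) {α : Type*} (A : ℕ → Set α) :
    {x : ℕ → α | ∀ n ∈ s, x n ∈ A n} = (s : Set ℕ).pi A := by
  ext x; simp [Set.mem_pi]

lemma prodMeasure_unique {α : Type*} [MeasurableSpace α] {μ : Measure α}
    (_hμ : IsProbabilityMeasure μ) {ν₁ ν₂ : Measure (ℕ → α)}
    (h₁ : IsProductMeasure μ ν₁) (h₂ : IsProductMeasure μ ν₂) : ν₁ = ν₂ := by
  have hfin : IsFiniteMeasure ν₁ :=
    ⟨by rw [prodMeasure_univ h₁]; exact ENNReal.one_lt_top⟩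
  refine ext_of_generate_finite _ generateFrom_squareCylinders.symm
    (isPiSystem_squareCylinders (fun i => MeasurableSpace.isPiSystem_measurableSet)
      (fun i => MeasurableSet.univ)) ?_ ?_
  · rintro S ⟨s, t, ht, rfl⟩
    simp only [Set.mem_univ_pi, Set.mem_setOf_eq] at ht
    rw [← cylinder_eq, h₁ s t ht, h₂ s t ht]
  · rw [prodMeasure_univ h₁, prodMeasure_univ h₂]

/-- Pushing a product measure forward coordinatewise by a measure preserving map gives
back the product measure. -/
lemma prodMeasure_map {α : Type*} [MeasurableSpace α] {μ : Measure α}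
    (hμ : IsProbabilityMeasure μ) {ν : Measure (ℕ → α)}
    (hν : IsProductMeasure μ ν) {T : α → α} (hTm : Measurable T)
    (hT : MeasurePreserving T μ μ) :
    ν.map (fun x n => T (x n)) = ν := by
  have hm : Measurable (fun x : ℕ → α => fun n => T (x n)) :=
    measurable_pi_lambda _ fun n => hTm.comp (measurable_pi_apply n)
  refine prodMeasure_unique hμ ?_ hν
  intro s A hA
  rw [Measure.map_apply hm]
  · have : (fun x : ℕ → α => fun n => T (x n)) ⁻¹' {x | ∀ n ∈ s, x n ∈ A n}
        = {x | ∀ n ∈ s, x n ∈ T ⁻¹' A n} := rfl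
    rw [this, hν s (fun n => T ⁻¹' A n) (fun n => hTm (hA n))]
    exact Finset.prod_congr rfl fun n _ => hT.measure_preimage (hA n).nullMeasurableSet
  · rw [cylinder_eq]
    exact MeasurableSet.pi (Finset.countable_toSet s) (fun n _ => hA n)

lemma prodMeasure_map_eval {α : Type*} [MeasurableSpace α] {μ : Measure α}
    {ν : Measure (ℕ → α)} (hν : IsProductMeasure μ ν) (n : ℕ) :
    ν.map (fun x : ℕ → α => x n) = μ := by
  ext s hs
  rw [Measure.map_apply (measurable_pi_apply n) hs]
  have : (fun x : ℕ → α => x n) ⁻¹' s = {x | ∀ k ∈ ({n} : Finset ℕ), x k ∈ s} := by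
    ext x; simp
  rw [this, hν ({n} : Finset ℕ) (fun _ => s) (fun _ => hs)]
  simp

/-- Isomorphic measurable functions of two variables have equal matrix distributions. -/
theorem stmt_0 (f₁ f₂ : I → I → ℝ)
    (hf₁ : Measurable fun p : I × I => f₁ p.1 p.2)
    (hf₂ : Measurable fun p : I × I => f₂ p.1 p.2)
    (T S : I ≃ᵐ I)
    (hT : MeasurePreserving T volume volume) (hS : MeasurePreserving S volume volume)
    (hiso : ∀ᵐ p : I × I ∂(volume.prod volume), f₂ (T p.1) (S p.2) = f₁ p.1 p.2)
    (νx νy : Measure (ℕ → I))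
    (hνx : IsProductMeasure volume νx) (hνy : IsProductMeasure volume νy) :
    (νx.prod νy).map (fun p (nm : ℕ × ℕ) => f₁ (p.1 nm.1) (p.2 nm.2)) =
      (νx.prod νy).map (fun p (nm : ℕ × ℕ) => f₂ (p.1 nm.1) (p.2 nm.2)) := by
  haveI hμprob : IsProbabilityMeasure (volume : Measure I) := by
    constructor
    simp [Real.volume_Icc]
  haveI : IsProbabilityMeasure νx := ⟨prodMeasure_univ hνx⟩
  haveI : IsProbabilityMeasure νy := ⟨prodMeasure_univ hνy⟩
  set ρ := νx.prod νy with hρ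
  -- the coordinatewise map
  set Φ : (ℕ → I) × (ℕ → I) → (ℕ → I) × (ℕ → I) :=
    Prod.map (fun x n => T (x n)) (fun y m => S (y m)) with hΦ
  have hTm : Measurable (fun x : ℕ → I => fun n => T (x n)) :=
    measurable_pi_lambda _ fun n => T.measurable.comp (measurable_pi_apply n)
  have hSm : Measurable (fun y : ℕ → I => fun m => S (y m)) :=
    measurable_pi_lambda _ fun m => S.measurable.comp (measurable_pi_apply m)
  have hΦm : Measurable Φ := hTm.prodMap hSm
  have hΦρ : ρ.map Φ = ρ := by
    rw [hΦ, hρ, ← Measure.map_prod_map _ _ hTm hSm,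
      prodMeasure_map hμprob hνx T.measurable hT, prodMeasure_map hμprob hνy S.measurable hS]
  -- the bad set
  set N : Set (I × I) := {p : I × I | ¬ f₂ (T p.1) (S p.2) = f₁ p.1 p.2} with hN
  have hNmeas : MeasurableSet N := by
    have h1 : Measurable fun p : I × I => f₂ (T p.1) (S p.2) :=
      hf₂.comp ((T.measurable.comp measurable_fst).prodMk (S.measurable.comp measurable_snd))
    exact (measurableSet_eq_fun h1 hf₁).compl
  have hNnull : (volume.prod volume : Measure (I × I)) N = 0 := by
    rw [← MeasureTheory.ae_iff] at *
    exact hiso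
  -- for a.e. pair of sequences, all coordinates are good
  have hae : ∀ᵐ p : (ℕ → I) × (ℕ → I) ∂ρ,
      ∀ nm : ℕ × ℕ, f₂ (T (p.1 nm.1)) (S (p.2 nm.2)) = f₁ (p.1 nm.1) (p.2 nm.2) := by
    rw [ae_all_iff]
    intro nm
    have hevm : Measurable (fun p : (ℕ → I) × (ℕ → I) => (p.1 nm.1, p.2 nm.2)) :=
      ((measurable_pi_apply nm.1).comp measurable_fst).prodMk
        ((measurable_pi_apply nm.2).comp measurable_snd)
    have hmap : ρ.map (fun p : (ℕ → I) × (ℕ → I) => (p.1 nm.1, p.2 nm.2))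
        = (volume.prod volume : Measure (I × I)) := by
      have : (fun p : (ℕ → I) × (ℕ → I) => (p.1 nm.1, p.2 nm.2))
          = Prod.map (fun x : ℕ → I => x nm.1) (fun y : ℕ → I => y nm.2) := rfl
      rw [hρ, this, ← Measure.map_prod_map _ _ (measurable_pi_apply nm.1)
        (measurable_pi_apply nm.2), prodMeasure_map_eval hνx, prodMeasure_map_eval hνy]
    rw [ae_iff]
    have : {p : (ℕ → I) × (ℕ → I) | ¬ f₂ (T (p.1 nm.1)) (S (p.2 nm.2))
        = f₁ (p.1 nm.1) (p.2 nm.2)}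
        = (fun p : (ℕ → I) × (ℕ → I) => (p.1 nm.1, p.2 nm.2)) ⁻¹' N := rfl
    rw [this, ← Measure.map_apply hevm hNmeas, hmap]
    exact hNnull
  -- conclude
  have hcongr : (fun p : (ℕ → I) × (ℕ → I) => fun nm : ℕ × ℕ => f₁ (p.1 nm.1) (p.2 nm.2))
      =ᵐ[ρ] (fun p : (ℕ → I) × (ℕ → I) => fun nm : ℕ × ℕ => f₂ (p.1 nm.1) (p.2 nm.2)) ∘ Φ := by
    filter_upwards [hae] with p hp
    funext nm
    exact (hp nm).symm
  have hF₂m : Measurable (fun p : (ℕ → I) × (ℕ → I) => fun nm : ℕ × ℕ =>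
      f₂ (p.1 nm.1) (p.2 nm.2)) := by
    refine measurable_pi_lambda _ fun nm => ?_
    have h : Measurable fun p : (ℕ → I) × (ℕ → I) => (p.1 nm.1, p.2 nm.2) :=
      ((measurable_pi_apply nm.1).comp measurable_fst).prodMk
        ((measurable_pi_apply nm.2).comp measurable_snd)
    exact hf₂.comp h
  calc ρ.map (fun p : (ℕ → I) × (ℕ → I) => fun nm : ℕ × ℕ => f₁ (p.1 nm.1) (p.2 nm.2))
      = ρ.map ((fun p : (ℕ → I) × (ℕ → I) => fun nm : ℕ × ℕ => f₂ (p.1 nm.1) (p.2 nm.2)) ∘ Φ) :=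
        Measure.map_congr hcongr
    _ = (ρ.map Φ).map (fun p : (ℕ → I) × (ℕ → I) => fun nm : ℕ × ℕ =>
          f₂ (p.1 nm.1) (p.2 nm.2)) := (Measure.map_map hF₂m hΦm).symm
    _ = ρ.map (fun p : (ℕ → I) × (ℕ → I) => fun nm : ℕ × ℕ => f₂ (p.1 nm.1) (p.2 nm.2)) := by
          rw [hΦρ]
end

section
/- Let (X, ρ, μ) be a metric triple with μ nonatomic and full support. Then two metric triples (X₁, ρ₁, μ₁), (X₂, ρ₂, μ₂) are isomorphic (there is a measure-preserving isometry between full-measure subsets) if and only if their matrix distributions coincide: the pushforwards of μ₁^ℕ and μ₂^ℕ under x ↦ (ρᵢ(xₙ, xₘ))ₙ,ₘ are equal as measures on the space of infinite symmetric distance matrices. (Gromov–Vershik recovery theorem.) -/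
open MeasureTheory ProbabilityTheory Filter Topology

set_option linter.unusedSectionVars false
set_option maxHeartbeats 1000000

namespace GVaux

section Basic

variable {X : Type*} [MeasurableSpace X] {μ : Measure X} {ν : Measure (ℕ → X)}

theorem cyl_eq (s : Finset ℕ) (A : ℕ → Set X) :
    {x : ℕ → X | ∀ n ∈ s, x n ∈ A n} = ⋂ n ∈ s, (fun x : ℕ → X => x n) ⁻¹' (A n) := by
  ext x; simp

theorem cyl_measurable (s : Finset ℕ) {A : ℕ → Set X} (hA : ∀ n, MeasurableSet (A n)) :
    MeasurableSet {x : ℕ → X | ∀ n ∈ s, x n ∈ A n} := by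
  rw [cyl_eq]
  exact MeasurableSet.biInter s.countable_toSet fun n _ => measurable_pi_apply n (hA n)

theorem prob (hν : IsProductMeasure μ ν) : IsProbabilityMeasure ν := by
  constructor
  have := hν ∅ (fun _ => Set.univ) (fun _ => MeasurableSet.univ)
  simpa using this

theorem map_eval (hν : IsProductMeasure μ ν) (n : ℕ) : ν.map (fun x => x n) = μ := by
  ext A hA
  rw [Measure.map_apply (measurable_pi_apply n) hA]
  have := hν {n} (fun _ => A) (fun _ => hA)
  simp at this; exact this

theorem eval_preimage (hν : IsProductMeasure μ ν) (n : ℕ) {A : Set X} (hA : MeasurableSet A) :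
    ν ((fun x : ℕ → X => x n) ⁻¹' A) = μ A := by
  rw [← Measure.map_apply (measurable_pi_apply n) hA, map_eval hν n]

theorem iIndep (hν : IsProductMeasure μ ν) :
    ProbabilityTheory.iIndepFun (fun n (x : ℕ → X) => x n) ν := by
  rw [ProbabilityTheory.iIndepFun_iff_measure_inter_preimage_eq_mul]
  intro S sets hsets
  classical
  set A : ℕ → Set X := fun n => if n ∈ S then sets n else Set.univ with hA
  have hAm : ∀ n, MeasurableSet (A n) := by
    intro n
    by_cases h : n ∈ S <;> simp [A, h, hsets n]
  have h1 := hν S A hAm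
  have e1 : (⋂ i ∈ S, (fun x : ℕ → X => x i) ⁻¹' sets i) = {x : ℕ → X | ∀ n ∈ S, x n ∈ A n} := by
    ext x
    simp only [Set.mem_iInter, Set.mem_setOf_eq, Set.mem_preimage]
    refine forall₂_congr fun n hn => ?_
    simp [A, hn]
  rw [e1, h1]
  refine Finset.prod_congr rfl fun n hn => ?_
  have : A n = sets n := by simp [A, hn]
  rw [this, eval_preimage hν n (hsets n hn)]

theorem unique {ν' : Measure (ℕ → X)} (h : IsProductMeasure μ ν) (h' : IsProductMeasure μ ν') :
    ν = ν' := by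
  have hp := prob h
  have hp' := prob h'
  classical
  set C : Set (Set (ℕ → X)) := {t | ∃ (s : Finset ℕ) (A : ℕ → Set X),
    (∀ n, MeasurableSet (A n)) ∧ t = {x | ∀ n ∈ s, x n ∈ A n}} with hC
  have hgen : (MeasurableSpace.pi : MeasurableSpace (ℕ → X)) = .generateFrom C := by
    refine le_antisymm ?_ (MeasurableSpace.generateFrom_le ?_)
    · refine iSup_le fun n => ?_
      rw [← measurable_iff_comap_le]
      intro A hA
      refine MeasurableSpace.measurableSet_generateFrom ⟨{n}, fun _ => A, fun _ => hA, ?_⟩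
      ext x; simp
    · rintro t ⟨s, A, hAm, rfl⟩
      exact cyl_measurable s hAm
  have hpi : IsPiSystem C := by
    rintro t1 ⟨s1, A1, hA1, rfl⟩ t2 ⟨s2, A2, hA2, rfl⟩ -
    refine ⟨s1 ∪ s2, fun n =>
      (if n ∈ s1 then A1 n else Set.univ) ∩ (if n ∈ s2 then A2 n else Set.univ), ?_, ?_⟩
    · intro n
      refine MeasurableSet.inter ?_ ?_ <;> split_ifs <;> simp [hA1 n, hA2 n]
    · ext x
      simp only [Set.mem_inter_iff, Set.mem_setOf_eq, Finset.mem_union]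
      constructor
      · rintro ⟨hx1, hx2⟩ n hn
        constructor <;> split_ifs with h
        exacts [hx1 n h, trivial, hx2 n h, trivial]
      · intro hx
        constructor
        · intro n hn
          have := (hx n (Or.inl hn)).1
          simpa [hn] using this
        · intro n hn
          have := (hx n (Or.inr hn)).2
          simpa [hn] using this
  refine ext_of_generate_finite C hgen hpi ?_ (by simp)
  rintro t ⟨s, A, hAm, rfl⟩
  rw [h s A hAm, h' s A hAm]

end Basic

section Freq

noncomputable def freq {α : Type*} (w : ℕ → α) (S : Set α) (N : ℕ) : ℝ :=
  (∑ k ∈ Finset.range N, S.indicator (fun _ => (1:ℝ)) (w k)) / N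

theorem freq_nonneg {α : Type*} (w : ℕ → α) (S : Set α) (N : ℕ) : 0 ≤ freq w S N := by
  apply div_nonneg _ (Nat.cast_nonneg N)
  exact Finset.sum_nonneg fun k _ => Set.indicator_nonneg (fun _ _ => zero_le_one) _

theorem freq_mono {α : Type*} (w : ℕ → α) {S T : Set α} (h : S ⊆ T) (N : ℕ) :
    freq w S N ≤ freq w T N := by
  rcases Nat.eq_zero_or_pos N with rfl | hN
  · simp [freq]
  apply div_le_div_of_nonneg_right ?_ (by positivity)
  exact Finset.sum_le_sum fun k _ =>
    Set.indicator_le_indicator_of_subset h (fun _ => zero_le_one) _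

theorem freq_compl {α : Type*} (w : ℕ → α) (S : Set α) {N : ℕ} (hN : 1 ≤ N) :
    freq w S N + freq w Sᶜ N = 1 := by
  have hNne : (N:ℝ) ≠ 0 := Nat.cast_ne_zero.mpr (by omega)
  rw [freq, freq, ← add_div, div_eq_one_iff_eq hNne]
  rw [← Finset.sum_add_distrib]
  have : ∀ k ∈ Finset.range N,
      S.indicator (fun _ => (1:ℝ)) (w k) + Sᶜ.indicator (fun _ => (1:ℝ)) (w k) = 1 := by
    intro k _
    by_cases h : w k ∈ S <;> simp [Set.indicator_apply, h]
  rw [Finset.sum_congr rfl this]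
  simp

theorem freq_comp {α β : Type*} (w : ℕ → α) (φ : α → β) (S : Set β) (N : ℕ) :
    freq (fun k => φ (w k)) S N = freq w (φ ⁻¹' S) N := by
  unfold freq
  rw [Finset.sum_congr rfl (fun k _ => ?_)]
  by_cases h : φ (w k) ∈ S <;> simp [Set.indicator_apply, h]

end Freq

section SLLN

variable {X : Type*} [MeasurableSpace X] {μ : Measure X} {ν : Measure (ℕ → X)}

theorem slln (hν : IsProductMeasure μ ν) {S : Set X} (hS : MeasurableSet S) :
    ∀ᵐ x ∂ν, Tendsto (fun N => freq x S N) atTop (𝓝 (μ S).toReal) := by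
  have hprob := prob hν
  set g : X → ℝ := S.indicator (fun _ => (1:ℝ)) with hg
  have hgm : Measurable g := measurable_const.indicator hS
  set Y : ℕ → (ℕ → X) → ℝ := fun k x => g (x k) with hY
  have hYm : ∀ k, Measurable (Y k) := fun k => hgm.comp (measurable_pi_apply k)
  have hint : Integrable (Y 0) ν := by
    have he : Y 0 = ((fun x : ℕ → X => x 0) ⁻¹' S).indicator (fun _ => (1:ℝ)) := by
      funext x
      by_cases h : x 0 ∈ S <;> simp [Y, g, Set.indicator_apply, h]
    rw [he, integrable_indicator_iff ((measurable_pi_apply 0) hS)]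
    exact integrableOn_const (measure_ne_top _ _)
  have hindep : Pairwise (Function.onFun (ProbabilityTheory.IndepFun · · ν) Y) := by
    intro i j hij
    exact ((iIndep hν).indepFun hij).comp hgm hgm
  have hmapY : ∀ i, ν.map (Y i) = μ.map g := by
    intro i
    rw [show Y i = g ∘ (fun x : ℕ → X => x i) from rfl,
      ← Measure.map_map hgm (measurable_pi_apply i), map_eval hν]
  have hident : ∀ i, ProbabilityTheory.IdentDistrib (Y i) (Y 0) ν ν := by
    intro i
    exact ⟨(hYm i).aemeasurable, (hYm 0).aemeasurable, by rw [hmapY, hmapY]⟩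
  have hmain := ProbabilityTheory.strong_law_ae_real Y hint hindep hident
  have hE : (∫ x, Y 0 x ∂ν) = (μ S).toReal := by
    have h1 : (∫ x, Y 0 x ∂ν) = ∫ z, g z ∂(ν.map (fun x : ℕ → X => x 0)) := by
      rw [integral_map (measurable_pi_apply 0).aemeasurable hgm.aestronglyMeasurable]
    rw [h1, map_eval hν]
    exact integral_indicator_one hS
  rw [hE] at hmain
  filter_upwards [hmain] with x hx
  exact hx

end SLLN

section MetricSide

variable {X : Type*} [MetricSpace X] [TopologicalSpace.SeparableSpace X]
  [MeasurableSpace X] [BorelSpace X] {μ : Measure X} [IsProbabilityMeasure μ]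
  {ν : Measure (ℕ → X)}

theorem nonempty_of_prob (μ' : Measure X) [IsProbabilityMeasure μ'] : Nonempty X := by
  rcases isEmpty_or_nonempty X with h | h
  · exfalso
    have h1 : μ' Set.univ = 1 := measure_univ
    rw [Set.univ_eq_empty_iff.mpr h, measure_empty] at h1
    exact zero_ne_one h1
  · exact h

theorem dense_ae (hsupp : ∀ U : Set X, IsOpen U → U.Nonempty → 0 < μ U)
    (hν : IsProductMeasure μ ν) : ∀ᵐ x ∂ν, DenseRange x := by
  have hprob := prob hν
  have hne : Nonempty X := nonempty_of_prob μ
  set e := TopologicalSpace.denseSeq X with he'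
  have he : DenseRange e := TopologicalSpace.denseRange_denseSeq X
  have key : ∀ (i : ℕ) (q : ℚ), 0 < q → ∀ᵐ x ∂ν, ∃ n, x n ∈ Metric.ball (e i) q := by
    intro i q hq
    set B := Metric.ball (e i) (q:ℝ) with hB
    have hq' : (0:ℝ) < q := by exact_mod_cast hq
    have hBpos : 0 < μ B := hsupp _ Metric.isOpen_ball ⟨e i, Metric.mem_ball_self hq'⟩
    have hBm : MeasurableSet B := Metric.isOpen_ball.measurableSet
    rw [ae_iff]
    have hsub : ∀ N : ℕ, {x : ℕ → X | ¬∃ n, x n ∈ B} ⊆ {x | ∀ n ∈ Finset.range N, x n ∈ Bᶜ} := by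
      intro N x hx n _
      exact fun hmem => hx ⟨n, hmem⟩
    have hval : ∀ N : ℕ, ν {x | ∀ n ∈ Finset.range N, x n ∈ Bᶜ} = (μ Bᶜ) ^ N := by
      intro N
      rw [hν (Finset.range N) (fun _ => Bᶜ) (fun _ => hBm.compl)]
      simp [Finset.prod_const]
    have hlt : μ Bᶜ < 1 := by
      rw [measure_compl hBm (measure_ne_top _ _), measure_univ]
      exact ENNReal.sub_lt_self ENNReal.one_ne_top one_ne_zero hBpos.ne'
    have htend : Tendsto (fun N : ℕ => (μ Bᶜ)^N) atTop (𝓝 0) :=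
      ENNReal.tendsto_pow_atTop_nhds_zero_of_lt_one hlt
    have hle : ∀ N, ν {x : ℕ → X | ¬∃ n, x n ∈ B} ≤ (μ Bᶜ)^N := by
      intro N
      calc ν {x : ℕ → X | ¬∃ n, x n ∈ B} ≤ ν {x | ∀ n ∈ Finset.range N, x n ∈ Bᶜ} :=
            measure_mono (hsub N)
        _ = (μ Bᶜ)^N := hval N
    have : ν {x : ℕ → X | ¬∃ n, x n ∈ B} ≤ 0 := ge_of_tendsto' htend hle
    exact le_antisymm this zero_le
  have hall : ∀ᵐ x ∂ν, ∀ (i : ℕ) (q : ℚ), 0 < q → ∃ n, x n ∈ Metric.ball (e i) q := by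
    rw [ae_all_iff]
    intro i
    rw [ae_all_iff]
    intro q
    by_cases hq : 0 < q
    · filter_upwards [key i q hq] with x hx _
      exact hx
    · exact Eventually.of_forall fun x h => absurd h hq
  filter_upwards [hall] with x hx
  rw [Metric.denseRange_iff]
  intro z r hr
  obtain ⟨q, hq0, hqr⟩ := exists_rat_btwn (half_pos hr)
  have hq' : 0 < q := by exact_mod_cast hq0
  obtain ⟨i, hi⟩ := he.exists_dist_lt z hq0
  obtain ⟨n, hn⟩ := hx i q hq'
  refine ⟨n, ?_⟩
  have h2 : dist (x n) (e i) < q := by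
    simpa [Metric.mem_ball] using hn
  calc dist z (x n) ≤ dist z (e i) + dist (e i) (x n) := dist_triangle _ _ _
    _ < q + q := add_lt_add hi (by rwa [dist_comm])
    _ < r := by linarith

theorem star_ae (hν : IsProductMeasure μ ν) :
    ∀ᵐ x ∂ν, ∀ U : Set X, IsOpen U → ∀ ε : ℝ, 0 < ε →
      ∀ᶠ N in atTop, (μ U).toReal - ε ≤ freq x U N := by
  have hprob := prob hν
  have hne : Nonempty X := nonempty_of_prob μ
  set e := TopologicalSpace.denseSeq X with he'
  have he : DenseRange e := TopologicalSpace.denseRange_denseSeq X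
  classical
  set K : Finset (ℕ × ℚ) → Set X := fun F => ⋃ p ∈ F, Metric.closedBall (e p.1) (p.2 : ℝ)
    with hK
  have hKm : ∀ F, MeasurableSet (K F) := fun F =>
    F.measurableSet_biUnion fun p _ => measurableSet_closedBall
  have h1 : ∀ᵐ x ∂ν, ∀ F, Tendsto (fun N => freq x (K F) N) atTop (𝓝 (μ (K F)).toReal) := by
    rw [ae_all_iff]
    exact fun F => slln hν (hKm F)
  filter_upwards [h1] with x hx
  intro U hU ε hε
  by_cases htriv : (μ U).toReal - ε ≤ 0
  · exact Eventually.of_forall fun N => htriv.trans (freq_nonneg x U N)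
  push_neg at htriv
  set P : Set (ℕ × ℚ) := {p | Metric.closedBall (e p.1) (p.2:ℝ) ⊆ U ∧ 0 < p.2} with hP
  have hmem : ∀ z ∈ U, ∃ p ∈ P, z ∈ Metric.closedBall (e p.1) (p.2:ℝ) := by
    intro z hz
    obtain ⟨ε', hε', hball⟩ := Metric.isOpen_iff.mp hU z hz
    obtain ⟨q, hq0, hq2⟩ := exists_rat_btwn (half_pos hε')
    have hq0' : 0 < q := by exact_mod_cast hq0
    obtain ⟨i, hi⟩ := he.exists_dist_lt z hq0
    refine ⟨(i, q), ⟨?_, hq0'⟩, ?_⟩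
    · intro w hw
      apply hball
      rw [Metric.mem_ball]
      have hw' : dist w (e i) ≤ q := hw
      calc dist w z ≤ dist w (e i) + dist (e i) z := dist_triangle _ _ _
        _ < q + q := by
            have := (dist_comm z (e i) ▸ hi)
            exact add_lt_add_of_le_of_lt hw' this
        _ < ε' := by linarith
    · exact Metric.mem_closedBall.mpr hi.le
  have hcover : U = ⋃ p ∈ P, Metric.closedBall (e p.1) (p.2:ℝ) := by
    apply Set.Subset.antisymm
    · intro z hz
      obtain ⟨p, hp, hzp⟩ := hmem z hz
      exact Set.mem_biUnion hp hzp
    · exact Set.iUnion₂_subset fun p hp => hp.1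
  have hUne : U.Nonempty := by
    by_contra h
    rw [Set.not_nonempty_iff_eq_empty] at h
    rw [h, measure_empty] at htriv
    simp at htriv
    linarith
  have hPne : P.Nonempty := by
    obtain ⟨z, hz⟩ := hUne
    obtain ⟨p, hp, _⟩ := hmem z hz
    exact ⟨p, hp⟩
  obtain ⟨f, hfP⟩ := Set.Countable.exists_eq_range (Set.to_countable P) hPne
  set Sn : ℕ → Set X := fun N => K ((Finset.range N).image f) with hSn
  have hSsub : ∀ N, Sn N ⊆ U := by
    intro N
    refine Set.iUnion₂_subset fun p hp => ?_
    rw [Finset.mem_image] at hp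
    obtain ⟨k, _, rfl⟩ := hp
    have : f k ∈ P := by rw [hfP]; exact ⟨k, rfl⟩
    exact this.1
  have hKmono : ∀ {F G : Finset (ℕ × ℚ)}, F ⊆ G → K F ⊆ K G := by
    intro F G hFG z hz
    rw [Set.mem_iUnion₂] at hz ⊢
    obtain ⟨p, hp, hzp⟩ := hz
    exact ⟨p, hFG hp, hzp⟩
  have hSmono : Monotone Sn := fun a b hab =>
    hKmono (Finset.image_subset_image (Finset.range_subset_range.mpr hab))
  have hSU : (⋃ N, Sn N) = U := by
    apply Set.Subset.antisymm
    · exact Set.iUnion_subset fun N => hSsub N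
    · intro z hz
      obtain ⟨p, hp, hzp⟩ := hmem z hz
      rw [hfP] at hp
      obtain ⟨k, rfl⟩ := hp
      refine Set.mem_iUnion.mpr ⟨k+1, ?_⟩
      exact Set.mem_iUnion₂.mpr ⟨f k,
        Finset.mem_image.mpr ⟨k, Finset.mem_range.mpr (Nat.lt_succ_self k), rfl⟩, hzp⟩
  have htend : Tendsto (fun N => μ (Sn N)) atTop (𝓝 (μ U)) := by
    have := tendsto_measure_iUnion_atTop (μ := μ) hSmono
    rwa [hSU] at this
  have htendR : Tendsto (fun N => (μ (Sn N)).toReal) atTop (𝓝 (μ U).toReal) :=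
    (ENNReal.tendsto_toReal (measure_ne_top μ U)).comp htend
  have hev : ∀ᶠ N in atTop, (μ U).toReal - ε/2 < (μ (Sn N)).toReal :=
    htendR.eventually (eventually_gt_nhds (by linarith))
  obtain ⟨N0, hN0⟩ := hev.exists
  have hfreq := hx ((Finset.range N0).image f)
  have hev2 : ∀ᶠ N in atTop, (μ (Sn N0)).toReal - ε/2 < freq x (Sn N0) N :=
    hfreq.eventually (eventually_gt_nhds (by linarith))
  filter_upwards [hev2] with N hN
  have hm := freq_mono x (hSsub N0) N
  linarith

end MetricSide

theorem extend_isometry {X Y : Type*} [MetricSpace X] [CompleteSpace X]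
    [MetricSpace Y] [CompleteSpace Y]
    {x : ℕ → X} {y : ℕ → Y} (hx : DenseRange x) (hy : DenseRange y)
    (hd : ∀ n m, dist (y n) (y m) = dist (x n) (x m)) :
    ∃ φ : X → Y, Isometry φ ∧ Function.Bijective φ ∧ ∀ n, φ (x n) = y n := by
  classical
  have sel : ∀ (z : X) (k : ℕ), ∃ n, dist z (x n) < 1/(k+1 : ℝ) := fun z k =>
    hx.exists_dist_lt z (by positivity)
  choose n hn using sel
  have hcau : ∀ z, CauchySeq (fun k => y (n z k)) := by
    intro z
    rw [Metric.cauchySeq_iff]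
    intro ε hε
    obtain ⟨N, hN⟩ := exists_nat_one_div_lt (half_pos hε)
    refine ⟨N, fun k hk l hl => ?_⟩
    have hb : ∀ j, N ≤ j → dist z (x (n z j)) < 1/(N+1 : ℝ) := by
      intro j hj
      refine lt_of_lt_of_le (hn z j) ?_
      apply one_div_le_one_div_of_le (by positivity)
      exact_mod_cast Nat.succ_le_succ hj
    calc dist (y (n z k)) (y (n z l)) = dist (x (n z k)) (x (n z l)) := hd _ _
      _ ≤ dist (x (n z k)) z + dist z (x (n z l)) := dist_triangle _ _ _
      _ < 1/(N+1 : ℝ) + 1/(N+1 : ℝ) := by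
          apply add_lt_add _ (hb l hl)
          rw [dist_comm]
          exact hb k hk
      _ < ε/2 + ε/2 := add_lt_add hN hN
      _ = ε := add_halves ε
  have key : ∀ z, ∃ c, Tendsto (fun k => y (n z k)) atTop (𝓝 c) := fun z =>
    cauchySeq_tendsto_of_complete (hcau z)
  choose φ hφ using key
  have hxz : ∀ z, Tendsto (fun k => x (n z k)) atTop (𝓝 z) := by
    intro z
    rw [tendsto_iff_dist_tendsto_zero]
    apply squeeze_zero (fun k => dist_nonneg) (fun k => ?_)
      tendsto_one_div_add_atTop_nhds_zero_nat
    rw [dist_comm]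
    exact (hn z k).le
  have hiso : Isometry φ := by
    apply Isometry.of_dist_eq
    intro z w
    have h1 : Tendsto (fun k => dist (y (n z k)) (y (n w k))) atTop (𝓝 (dist (φ z) (φ w))) :=
      (hφ z).dist (hφ w)
    have h2 : Tendsto (fun k => dist (x (n z k)) (x (n w k))) atTop (𝓝 (dist z w)) :=
      (hxz z).dist (hxz w)
    have he : (fun k => dist (y (n z k)) (y (n w k))) = fun k => dist (x (n z k)) (x (n w k)) :=
      funext fun k => hd _ _
    rw [he] at h1
    exact tendsto_nhds_unique h1 h2
  have hfix : ∀ m, φ (x m) = y m := by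
    intro m
    have h1 : Tendsto (fun k => y (n (x m) k)) atTop (𝓝 (φ (x m))) := hφ _
    have h2 : Tendsto (fun k => y (n (x m) k)) atTop (𝓝 (y m)) := by
      rw [tendsto_iff_dist_tendsto_zero]
      apply squeeze_zero (fun k => dist_nonneg) (fun k => ?_)
        tendsto_one_div_add_atTop_nhds_zero_nat
      rw [hd, dist_comm]
      exact (hn (x m) k).le
    exact tendsto_nhds_unique h1 h2
  refine ⟨φ, hiso, ⟨hiso.injective, ?_⟩, hfix⟩
  have hclosed : IsClosed (Set.range φ) := hiso.isClosedEmbedding.isClosed_range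
  intro w
  have hw : w ∈ closure (Set.range y) := hy w
  have hsub : Set.range y ⊆ Set.range φ := by
    rintro _ ⟨m, rfl⟩
    exact ⟨x m, hfix m⟩
  have : w ∈ Set.range φ := by
    rw [← hclosed.closure_eq]
    exact closure_mono hsub hw
  exact this

theorem le_on_open {Y : Type*} [MetricSpace Y] [MeasurableSpace Y] [OpensMeasurableSpace Y]
    (κ lam : Measure Y) [IsProbabilityMeasure κ] [IsProbabilityMeasure lam]
    (g : Set Y → ℕ → ℝ)
    (hmono : ∀ (S T : Set Y), S ⊆ T → ∀ N, g S N ≤ g T N)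
    (hcompl : ∀ S : Set Y, ∀ N : ℕ, 1 ≤ N → g S N + g Sᶜ N = 1)
    (hκ : ∀ U : Set Y, IsOpen U → ∀ ε : ℝ, 0 < ε → ∀ᶠ N in atTop, (κ U).toReal - ε ≤ g U N)
    (hlam : ∀ U : Set Y, IsOpen U → ∀ ε : ℝ, 0 < ε → ∀ᶠ N in atTop, (lam U).toReal - ε ≤ g U N)
    {U : Set Y} (hU : IsOpen U) : lam U ≤ κ U := by
  rcases eq_or_ne U Set.univ with rfl | hUne
  · simp [measure_univ]
  have hUc : Uᶜ.Nonempty := Set.nonempty_compl.mpr hUne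
  set V : ℕ → Set Y := fun n => {z | 1/(n+1 : ℝ) < Metric.infDist z Uᶜ} with hV
  set C : ℕ → Set Y := fun n => {z | 1/(n+1 : ℝ) ≤ Metric.infDist z Uᶜ} with hC
  have hVopen : ∀ n, IsOpen (V n) :=
    fun n => isOpen_lt continuous_const (Metric.continuous_infDist_pt Uᶜ)
  have hCclosed : ∀ n, IsClosed (C n) :=
    fun n => isClosed_le continuous_const (Metric.continuous_infDist_pt Uᶜ)
  have hVC : ∀ n, V n ⊆ C n := fun n z hz => (le_of_lt (show 1/(n+1:ℝ) < Metric.infDist z Uᶜ from hz) : z ∈ C n)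
  have hCU : ∀ n, C n ⊆ U := by
    intro n z hz
    by_contra hzU
    have h0 : Metric.infDist z Uᶜ = 0 := Metric.infDist_zero_of_mem hzU
    have hz2 : 1/(n+1 : ℝ) ≤ Metric.infDist z Uᶜ := hz
    have hz' : 1/(n+1 : ℝ) ≤ 0 := by rwa [h0] at hz2
    have : (0:ℝ) < 1/(n+1 : ℝ) := by positivity
    linarith
  have hVmono : Monotone V := by
    intro a b hab z hz
    have hz2 : 1/(a+1 : ℝ) < Metric.infDist z Uᶜ := hz
    show 1/(b+1 : ℝ) < Metric.infDist z Uᶜ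
    refine lt_of_le_of_lt ?_ hz2
    apply one_div_le_one_div_of_le (by positivity)
    have : (a:ℝ) ≤ b := by exact_mod_cast hab
    linarith
  have hVU : (⋃ n, V n) = U := by
    apply Set.Subset.antisymm
    · exact Set.iUnion_subset fun n => (hVC n).trans (hCU n)
    · intro z hz
      obtain ⟨ε', hε', hball⟩ := Metric.isOpen_iff.mp hU z hz
      have hinf : ε' ≤ Metric.infDist z Uᶜ := by
        by_contra h
        push_neg at h
        obtain ⟨w, hwU, hwd⟩ := (Metric.infDist_lt_iff hUc).mp h
        exact hwU (hball (Metric.mem_ball.mpr (by rwa [dist_comm])))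
      obtain ⟨m, hm⟩ := exists_nat_one_div_lt hε'
      exact Set.mem_iUnion.mpr ⟨m, lt_of_lt_of_le hm hinf⟩
  have hmeas : Tendsto (fun n => lam (V n)) atTop (𝓝 (lam U)) := by
    have := tendsto_measure_iUnion_atTop (μ := lam) hVmono
    rwa [hVU] at this
  refine le_of_tendsto hmeas (Eventually.of_forall fun n => ?_)
  have main : ∀ ε : ℝ, 0 < ε → (lam (V n)).toReal ≤ (κ U).toReal + 2*ε := by
    intro ε hε
    have h1 := hlam (V n) (hVopen n) ε hε
    have h2 := hκ (C n)ᶜ (hCclosed n).isOpen_compl ε hε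
    have h3 : ∀ᶠ N in atTop, 1 ≤ N := eventually_ge_atTop 1
    obtain ⟨N, hN1, hN2, hN3⟩ := (h1.and (h2.and h3)).exists
    have e1 : g (V n) N ≤ g (C n) N := hmono _ _ (hVC n) N
    have e2 : g (C n) N + g (C n)ᶜ N = 1 := hcompl (C n) N hN3
    have e4 : (κ (C n)ᶜ).toReal = 1 - (κ (C n)).toReal := by
      rw [measure_compl (hCclosed n).measurableSet (measure_ne_top _ _), measure_univ,
        ENNReal.toReal_sub_of_le prob_le_one ENNReal.one_ne_top]
      simp
    have e5 : (κ (C n)).toReal ≤ (κ U).toReal :=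
      ENNReal.toReal_mono (measure_ne_top _ _) (measure_mono (hCU n))
    linarith
  have hto : (lam (V n)).toReal ≤ (κ U).toReal := by
    by_contra h
    push_neg at h
    have := main (((lam (V n)).toReal - (κ U).toReal)/3) (by linarith)
    linarith
  exact (ENNReal.toReal_le_toReal (measure_ne_top _ _) (measure_ne_top _ _)).mp hto

theorem measure_eq_of_freq {Y : Type*} [MetricSpace Y] [MeasurableSpace Y] [BorelSpace Y]
    (κ lam : Measure Y) [IsProbabilityMeasure κ] [IsProbabilityMeasure lam]
    (g : Set Y → ℕ → ℝ)
    (hmono : ∀ (S T : Set Y), S ⊆ T → ∀ N, g S N ≤ g T N)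
    (hcompl : ∀ S : Set Y, ∀ N : ℕ, 1 ≤ N → g S N + g Sᶜ N = 1)
    (hκ : ∀ U : Set Y, IsOpen U → ∀ ε : ℝ, 0 < ε → ∀ᶠ N in atTop, (κ U).toReal - ε ≤ g U N)
    (hlam : ∀ U : Set Y, IsOpen U → ∀ ε : ℝ, 0 < ε → ∀ᶠ N in atTop, (lam U).toReal - ε ≤ g U N) :
    lam = κ := by
  have heq : ∀ U : Set Y, IsOpen U → lam U = κ U := fun U hU =>
    le_antisymm (le_on_open κ lam g hmono hcompl hκ hlam hU)
      (le_on_open lam κ g hmono hcompl hlam hκ hU)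
  refine ext_of_generate_finite {U : Set Y | IsOpen U} ?_ ?_ ?_ ?_
  · rw [BorelSpace.measurable_eq (α := Y)]
    rfl
  · intro s hs t ht _
    exact hs.inter ht
  · intro t ht
    exact heq t ht
  · rw [measure_univ, measure_univ]

end GVaux

/-- Gromov–Vershik recovery theorem: two metric triples are isomorphic (by a measure-preserving
isometry between full-measure subsets) if and only if their matrix distributions coincide. -/
theorem stmt_10 (X₁ X₂ : Type*)
    [MetricSpace X₁] [TopologicalSpace.SeparableSpace X₁] [CompleteSpace X₁]
    [MeasurableSpace X₁] [BorelSpace X₁]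
    [MetricSpace X₂] [TopologicalSpace.SeparableSpace X₂] [CompleteSpace X₂]
    [MeasurableSpace X₂] [BorelSpace X₂]
    (μ₁ : Measure X₁) [IsProbabilityMeasure μ₁] [NullSingletonClass μ₁]
    (hsupp₁ : ∀ U : Set X₁, IsOpen U → U.Nonempty → 0 < μ₁ U)
    (μ₂ : Measure X₂) [IsProbabilityMeasure μ₂] [NullSingletonClass μ₂]
    (hsupp₂ : ∀ U : Set X₂, IsOpen U → U.Nonempty → 0 < μ₂ U)
    (ν₁ : Measure (ℕ → X₁)) (hν₁ : IsProductMeasure μ₁ ν₁)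
    (ν₂ : Measure (ℕ → X₂)) (hν₂ : IsProductMeasure μ₂ ν₂) :
    (∃ (A₁ : Set X₁) (A₂ : Set X₂) (φ : X₁ → X₂),
        MeasurableSet A₁ ∧ MeasurableSet A₂ ∧ μ₁ A₁ᶜ = 0 ∧ μ₂ A₂ᶜ = 0 ∧
        Measurable φ ∧ Set.BijOn φ A₁ A₂ ∧ μ₁.map φ = μ₂ ∧
        ∀ x ∈ A₁, ∀ y ∈ A₁, dist (φ x) (φ y) = dist x y) ↔
      ν₁.map (fun x (nm : ℕ × ℕ) => dist (x nm.1) (x nm.2)) =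
        ν₂.map (fun x (nm : ℕ × ℕ) => dist (x nm.1) (x nm.2)) := by
  have hD₁ : Measurable (fun x : ℕ → X₁ => fun nm : ℕ × ℕ => dist (x nm.1) (x nm.2)) :=
    measurable_pi_lambda _ fun nm => (measurable_pi_apply nm.1).dist (measurable_pi_apply nm.2)
  have hD₂ : Measurable (fun x : ℕ → X₂ => fun nm : ℕ × ℕ => dist (x nm.1) (x nm.2)) :=
    measurable_pi_lambda _ fun nm => (measurable_pi_apply nm.1).dist (measurable_pi_apply nm.2)
  haveI hp1 : IsProbabilityMeasure ν₁ := GVaux.prob hν₁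
  haveI hp2 : IsProbabilityMeasure ν₂ := GVaux.prob hν₂
  constructor
  · rintro ⟨A₁, A₂, φ, hA₁m, hA₂m, hA₁c, hA₂c, hφm, hbij, hmap, hdist⟩
    set Φ : (ℕ → X₁) → (ℕ → X₂) := fun x n => φ (x n) with hΦ
    have hΦm : Measurable Φ := measurable_pi_lambda _ fun n => hφm.comp (measurable_pi_apply n)
    have hprod : IsProductMeasure μ₂ (ν₁.map Φ) := by
      intro s A hA
      rw [Measure.map_apply hΦm (GVaux.cyl_measurable s hA)]
      have hpre : Φ ⁻¹' {x | ∀ n ∈ s, x n ∈ A n} = {x : ℕ → X₁ | ∀ n ∈ s, x n ∈ φ ⁻¹' (A n)} :=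
        rfl
      rw [hpre, hν₁ s (fun n => φ ⁻¹' (A n)) (fun n => hφm (hA n))]
      refine Finset.prod_congr rfl fun n _ => ?_
      rw [← hmap, Measure.map_apply hφm (hA n)]
    have hΦν : ν₁.map Φ = ν₂ := GVaux.unique hprod hν₂
    have hfull : ∀ᵐ x ∂ν₁, ∀ n, x n ∈ A₁ := by
      rw [ae_iff]
      have he : {x : ℕ → X₁ | ¬ ∀ n, x n ∈ A₁} = ⋃ n, (fun x : ℕ → X₁ => x n) ⁻¹' A₁ᶜ := by
        ext x
        simp [Set.mem_iUnion]
      rw [he]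
      refine measure_iUnion_null fun n => ?_
      rw [GVaux.eval_preimage hν₁ n hA₁m.compl, hA₁c]
    have hae : (fun x : ℕ → X₁ => fun nm : ℕ × ℕ => dist (x nm.1) (x nm.2)) =ᵐ[ν₁]
        (fun x => fun nm : ℕ × ℕ => dist (φ (x nm.1)) (φ (x nm.2))) := by
      filter_upwards [hfull] with x hx
      funext nm
      exact (hdist _ (hx _) _ (hx _)).symm
    calc ν₁.map (fun x (nm : ℕ × ℕ) => dist (x nm.1) (x nm.2))
        = ν₁.map ((fun x (nm : ℕ × ℕ) => dist (x nm.1) (x nm.2)) ∘ Φ) := Measure.map_congr hae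
      _ = (ν₁.map Φ).map (fun x (nm : ℕ × ℕ) => dist (x nm.1) (x nm.2)) :=
          (Measure.map_map hD₂ hΦm).symm
      _ = ν₂.map (fun x (nm : ℕ × ℕ) => dist (x nm.1) (x nm.2)) := by rw [hΦν]
  · intro h
    haveI : Nonempty X₁ := GVaux.nonempty_of_prob μ₁
    haveI : Nonempty X₂ := GVaux.nonempty_of_prob μ₂
    set D₁ : (ℕ → X₁) → (ℕ × ℕ → ℝ) := fun x nm => dist (x nm.1) (x nm.2) with hD₁def
    set D₂ : (ℕ → X₂) → (ℕ × ℕ → ℝ) := fun x nm => dist (x nm.1) (x nm.2) with hD₂def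
    -- good sets
    have hG₁ : ∀ᵐ x ∂ν₁, DenseRange x ∧ ∀ U : Set X₁, IsOpen U → ∀ ε : ℝ, 0 < ε →
        ∀ᶠ N in atTop, (μ₁ U).toReal - ε ≤ GVaux.freq x U N :=
      (GVaux.dense_ae hsupp₁ hν₁).and (GVaux.star_ae hν₁)
    have hG₂ : ∀ᵐ y ∂ν₂, DenseRange y ∧ ∀ U : Set X₂, IsOpen U → ∀ ε : ℝ, 0 < ε →
        ∀ᶠ N in atTop, (μ₂ U).toReal - ε ≤ GVaux.freq y U N :=
      (GVaux.dense_ae hsupp₂ hν₂).and (GVaux.star_ae hν₂)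
    obtain ⟨T₁, hT₁sub, hT₁m, hT₁0⟩ := exists_measurable_superset_of_null (ae_iff.mp hG₁)
    obtain ⟨T₂, hT₂sub, hT₂m, hT₂0⟩ := exists_measurable_superset_of_null (ae_iff.mp hG₂)
    set W₁ := T₁ᶜ with hW₁def
    set W₂ := T₂ᶜ with hW₂def
    have hW₁m : MeasurableSet W₁ := hT₁m.compl
    have hW₂m : MeasurableSet W₂ := hT₂m.compl
    have hW₁ae : ∀ᵐ x ∂ν₁, x ∈ W₁ := by
      rw [ae_iff]
      have : {x : ℕ → X₁ | ¬ x ∈ W₁} = T₁ := by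
        ext x; simp [hW₁def]
      rwa [this]
    have hW₂ae : ∀ᵐ y ∂ν₂, y ∈ W₂ := by
      rw [ae_iff]
      have : {y : ℕ → X₂ | ¬ y ∈ W₂} = T₂ := by
        ext y; simp [hW₂def]
      rwa [this]
    have hW₁good : ∀ x ∈ W₁, DenseRange x ∧ ∀ U : Set X₁, IsOpen U → ∀ ε : ℝ, 0 < ε →
        ∀ᶠ N in atTop, (μ₁ U).toReal - ε ≤ GVaux.freq x U N := by
      intro x hx
      by_contra hbad
      exact hx (hT₁sub hbad)
    have hW₂good : ∀ y ∈ W₂, DenseRange y ∧ ∀ U : Set X₂, IsOpen U → ∀ ε : ℝ, 0 < ε →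
        ∀ᶠ N in atTop, (μ₂ U).toReal - ε ≤ GVaux.freq y U N := by
      intro y hy
      by_contra hbad
      exact hy (hT₂sub hbad)
    -- disintegration
    set ρ₁ : Measure ((ℕ × ℕ → ℝ) × (ℕ → X₁)) := ν₁.map (fun x => (D₁ x, x)) with hρ₁
    set ρ₂ : Measure ((ℕ × ℕ → ℝ) × (ℕ → X₂)) := ν₂.map (fun y => (D₂ y, y)) with hρ₂
    have hf₁ : Measurable (fun x : ℕ → X₁ => (D₁ x, x)) := hD₁.prodMk measurable_id
    have hf₂ : Measurable (fun y : ℕ → X₂ => (D₂ y, y)) := hD₂.prodMk measurable_id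
    haveI : IsProbabilityMeasure ρ₁ := Measure.isProbabilityMeasure_map hf₁.aemeasurable
    haveI : IsProbabilityMeasure ρ₂ := Measure.isProbabilityMeasure_map hf₂.aemeasurable
    have hfst₁ : ρ₁.fst = ν₁.map D₁ := by
      rw [hρ₁, Measure.fst, Measure.map_map measurable_fst hf₁]
      rfl
    have hfst₂ : ρ₂.fst = ν₂.map D₂ := by
      rw [hρ₂, Measure.fst, Measure.map_map measurable_fst hf₂]
      rfl
    have hms₁ : MeasurableSet {p : (ℕ × ℕ → ℝ) × (ℕ → X₁) | p.2 ∈ W₁ ∧ D₁ p.2 = p.1} := by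
      have he : {p : (ℕ × ℕ → ℝ) × (ℕ → X₁) | p.2 ∈ W₁ ∧ D₁ p.2 = p.1} =
          (Prod.snd ⁻¹' W₁) ∩ {p : (ℕ × ℕ → ℝ) × (ℕ → X₁) | D₁ p.2 = p.1} := rfl
      rw [he]
      exact (measurable_snd hW₁m).inter
        (measurableSet_eq_fun (hD₁.comp measurable_snd) measurable_fst)
    have hms₂ : MeasurableSet {p : (ℕ × ℕ → ℝ) × (ℕ → X₂) | p.2 ∈ W₂ ∧ D₂ p.2 = p.1} := by
      have he : {p : (ℕ × ℕ → ℝ) × (ℕ → X₂) | p.2 ∈ W₂ ∧ D₂ p.2 = p.1} =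
          (Prod.snd ⁻¹' W₂) ∩ {p : (ℕ × ℕ → ℝ) × (ℕ → X₂) | D₂ p.2 = p.1} := rfl
      rw [he]
      exact (measurable_snd hW₂m).inter
        (measurableSet_eq_fun (hD₂.comp measurable_snd) measurable_fst)
    have hae₁ : ∀ᵐ p ∂ρ₁, p.2 ∈ W₁ ∧ D₁ p.2 = p.1 := by
      rw [hρ₁, ae_map_iff hf₁.aemeasurable hms₁]
      filter_upwards [hW₁ae] with x hx
      exact ⟨hx, rfl⟩
    have hae₂ : ∀ᵐ p ∂ρ₂, p.2 ∈ W₂ ∧ D₂ p.2 = p.1 := by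
      rw [hρ₂, ae_map_iff hf₂.aemeasurable hms₂]
      filter_upwards [hW₂ae] with y hy
      exact ⟨hy, rfl⟩
    have hker₁ : ∀ᵐ r ∂(ν₁.map D₁), ∀ᵐ ω ∂(ρ₁.condKernel r), ω ∈ W₁ ∧ D₁ ω = r := by
      rw [← hfst₁]
      exact Measure.ae_ae_of_ae_compProd (p := fun p => p.2 ∈ W₁ ∧ D₁ p.2 = p.1)
        (by rwa [ρ₁.disintegrate ρ₁.condKernel])
    have hker₂ : ∀ᵐ r ∂(ν₁.map D₁), ∀ᵐ ω ∂(ρ₂.condKernel r), ω ∈ W₂ ∧ D₂ ω = r := by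
      rw [h, ← hfst₂]
      exact Measure.ae_ae_of_ae_compProd (p := fun p => p.2 ∈ W₂ ∧ D₂ p.2 = p.1)
        (by rwa [ρ₂.disintegrate ρ₂.condKernel])
    haveI : IsProbabilityMeasure (ν₁.map D₁) := Measure.isProbabilityMeasure_map hD₁.aemeasurable
    haveI : (ae (ν₁.map D₁)).NeBot := ae_neBot.mpr (IsProbabilityMeasure.ne_zero _)
    obtain ⟨r, hr₁, hr₂⟩ := (hker₁.and hker₂).exists
    haveI : (ae (ρ₁.condKernel r)).NeBot := ae_neBot.mpr (IsProbabilityMeasure.ne_zero _)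
    haveI : (ae (ρ₂.condKernel r)).NeBot := ae_neBot.mpr (IsProbabilityMeasure.ne_zero _)
    obtain ⟨x, hxW, hxD⟩ := hr₁.exists
    obtain ⟨y, hyW, hyD⟩ := hr₂.exists
    obtain ⟨hxdense, hxstar⟩ := hW₁good x hxW
    obtain ⟨hydense, hystar⟩ := hW₂good y hyW
    have hd : ∀ n m, dist (y n) (y m) = dist (x n) (x m) := by
      intro n m
      have h1 := congrFun hyD (n, m)
      have h2 := congrFun hxD (n, m)
      rw [hD₂def] at h1
      rw [hD₁def] at h2
      simp only at h1 h2
      rw [h1, ← h2]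
    obtain ⟨φ, hiso, hbij, hfix⟩ := GVaux.extend_isometry hxdense hydense hd
    have hφm : Measurable φ := hiso.continuous.measurable
    haveI : IsProbabilityMeasure (μ₁.map φ) := Measure.isProbabilityMeasure_map hφm.aemeasurable
    have hmap : μ₁.map φ = μ₂ := by
      refine GVaux.measure_eq_of_freq μ₂ (μ₁.map φ) (fun S N => GVaux.freq y S N)
        (fun S T hST N => GVaux.freq_mono y hST N)
        (fun S N hN => GVaux.freq_compl y S hN)
        (fun U hU ε hε => hystar U hU ε hε) ?_
      intro U hU ε hε
      rw [Measure.map_apply hφm hU.measurableSet]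
      have hpre := hxstar (φ ⁻¹' U) (hU.preimage hiso.continuous) ε hε
      filter_upwards [hpre] with N hN
      have he : GVaux.freq x (φ ⁻¹' U) N = GVaux.freq y U N := by
        rw [← GVaux.freq_comp x φ U N]
        congr 1
        funext k
        exact hfix k
      rwa [he] at hN
    exact ⟨Set.univ, Set.univ, φ, MeasurableSet.univ, MeasurableSet.univ,
      by simp, by simp, hφm, Set.bijOn_univ.mpr hbij, hmap,
      fun a _ b _ => hiso.dist_eq a b⟩
end
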